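/- Let f(x) = xᵀAx − 2aᵀx + θ be a concave quadratic function on ℝⁿ with A negative semidefinite and A ≠ 0. Then (graph f)• equals the hypograph of f. -/

import Mathlib

open Matrix

/-- The set of convex combinations of pairs of points of `D`. -/
def bullet {V : Type*} [AddCommGroup V] [Module ℝ V] (D : Set V) : Set V :=
  {x | ∃ u ∈ D, ∃ v ∈ D, ∃ l : ℝ, 0 ≤ l ∧ l ≤ 1 ∧ x = l • u + (1 - l) • v}

lemma quad_expand (n : ℕ) (A : Matrix (Fin n) (Fin n) ℝ) (x y : Fin n → ℝ) (s t : ℝ) :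
    (s•x + t•y) ⬝ᵥ A.mulVec (s•x+t•y) = s^2 * (x ⬝ᵥ A.mulVec x) + s*t*(x⬝ᵥA.mulVec y)
      + s*t*(y⬝ᵥA.mulVec x) + t^2*(y⬝ᵥA.mulVec y) := by
  simp [Matrix.mulVec_add, Matrix.mulVec_smul, dotProduct_add, add_dotProduct,
    dotProduct_smul, smul_dotProduct, smul_eq_mul]
  ring

lemma exists_neg_dir (n : ℕ) (A : Matrix (Fin n) (Fin n) ℝ)
    (hA : (-A).PosSemidef) (hA0 : A ≠ 0) :
    ∃ d : Fin n → ℝ, d ⬝ᵥ A.mulVec d < 0 := by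
  by_contra h
  push_neg at h
  have hz : ∀ d : Fin n → ℝ, d ⬝ᵥ A.mulVec d = 0 := by
    intro d
    have h1 : 0 ≤ d ⬝ᵥ (-A).mulVec d := hA.dotProduct_mulVec_nonneg d
    have h2 : d ⬝ᵥ (-A).mulVec d = -(d ⬝ᵥ A.mulVec d) := by
      simp [Matrix.neg_mulVec]
    nlinarith [h d]
  have hsym : Aᵀ = A := by
    have h2 : (-A)ᵀ = -A := by simpa using hA.1.eq
    have := congrArg Neg.neg h2
    simpa using this
  apply hA0
  ext i j
  have hd : ∀ i j : Fin n, Pi.single i 1 ⬝ᵥ A.mulVec (Pi.single j 1) = A i j := by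
    intro i j
    simp [Matrix.mulVec_single, single_dotProduct]
  have hij : A j i = A i j := by
    conv_lhs => rw [← hsym]
    rfl
  have h3 := hz ((1:ℝ) • (Pi.single i 1 : Fin n → ℝ) + (1:ℝ) • (Pi.single j 1 : Fin n → ℝ))
  rw [quad_expand] at h3
  rw [hd, hd, hd, hd] at h3
  have hii := hz (Pi.single i 1)
  have hjj := hz (Pi.single j 1)
  rw [hd] at hii
  rw [hd] at hjj
  simp only [Matrix.zero_apply]
  nlinarith

theorem stmt5 (n : ℕ) (A : Matrix (Fin n) (Fin n) ℝ) (a : Fin n → ℝ) (θ : ℝ)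
    (hA : (-A).PosSemidef) (hA0 : A ≠ 0)
    (f : (Fin n → ℝ) → ℝ)
    (hf : ∀ x, f x = x ⬝ᵥ A.mulVec x - 2 * (a ⬝ᵥ x) + θ) :
    bullet {p : (Fin n → ℝ) × ℝ | p.2 = f p.1} = {p : (Fin n → ℝ) × ℝ | p.2 ≤ f p.1} := by
  ext p
  constructor
  · rintro ⟨u, hu, v, hv, l, hl0, hl1, hp⟩
    simp only [Set.mem_setOf_eq] at hu hv ⊢
    obtain ⟨x, s⟩ := p
    obtain ⟨hx, hs⟩ : x = l • u.1 + (1 - l) • v.1 ∧ s = l * u.2 + (1 - l) * v.2 := by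
      constructor
      · exact congrArg Prod.fst hp
      · simpa using congrArg Prod.snd hp
    have hcross : (u.1 - v.1) ⬝ᵥ A.mulVec (u.1 - v.1) ≤ 0 := by
      have h1 : 0 ≤ (u.1 - v.1) ⬝ᵥ (-A).mulVec (u.1 - v.1) := hA.dotProduct_mulVec_nonneg _
      have h2 : (u.1 - v.1) ⬝ᵥ (-A).mulVec (u.1 - v.1)
          = -((u.1 - v.1) ⬝ᵥ A.mulVec (u.1 - v.1)) := by simp [Matrix.neg_mulVec]
      rw [h2] at h1; linarith
    have key : l * f u.1 + (1 - l) * f v.1 ≤ f (l • u.1 + (1 - l) • v.1) := by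
      rw [hf, hf, hf, quad_expand]
      have hsub : u.1 - v.1 = (1:ℝ) • u.1 + (-1:ℝ) • v.1 := by
        simp [sub_eq_add_neg]
      rw [hsub, quad_expand] at hcross
      have hdp : a ⬝ᵥ (l • u.1 + (1 - l) • v.1)
          = l * (a ⬝ᵥ u.1) + (1 - l) * (a ⬝ᵥ v.1) := by
        simp [dotProduct_add, dotProduct_smul, smul_eq_mul]
      rw [hdp]
      nlinarith [mul_nonneg hl0 (sub_nonneg.mpr hl1)]
    simp only [Set.mem_setOf_eq]
    rw [hx, hs, hu, hv]
    exact key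
  · intro hp
    simp only [Set.mem_setOf_eq] at hp
    obtain ⟨x, t⟩ := p
    simp only at hp
    obtain ⟨d, hd⟩ := exists_neg_dir n A hA hA0
    set c : ℝ := f x - t with hc
    have hc0 : 0 ≤ c := by simp [hc]; linarith
    set s : ℝ := Real.sqrt (c / (-(d ⬝ᵥ A.mulVec d))) with hsdef
    have hratio : 0 ≤ c / (-(d ⬝ᵥ A.mulVec d)) := by
      apply div_nonneg hc0; linarith
    have hs2 : s^2 = c / (-(d ⬝ᵥ A.mulVec d)) := Real.sq_sqrt hratio
    refine ⟨(x + s • d, f (x + s • d)), rfl, (x - s • d, f (x - s • d)), rfl,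
      1/2, by norm_num, by norm_num, ?_⟩
    have hsum : f (x + s • d) + f (x - s • d) = 2 * f x + 2 * s^2 * (d ⬝ᵥ A.mulVec d) := by
      rw [hf, hf, hf]
      have e1 : x + s • d = (1:ℝ) • x + s • d := by simp
      have e2 : x - s • d = (1:ℝ) • x + (-s) • d := by simp [sub_eq_add_neg]
      rw [e1, e2, quad_expand, quad_expand]
      simp only [dotProduct_add, dotProduct_smul, smul_eq_mul]
      ring
    have hq : s^2 * (d ⬝ᵥ A.mulVec d) = -c := by
      have hne : -(d ⬝ᵥ A.mulVec d) ≠ 0 := by linarith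
      rw [hs2, div_mul_eq_mul_div, div_eq_iff hne]; ring
    simp only [Prod.ext_iff, Prod.smul_fst, Prod.smul_snd, Prod.fst_add, Prod.snd_add,
      smul_eq_mul]
    constructor
    · module
    · simp only [hc] at hq
      linarith
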